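/- Let G be a bipartite graph with no cycle of length less than 2l (l ≥ 2). If C and C' are two distinct cycles of length 2l in G that share a path with l vertices (i.e., of length l-1), then the intersection of C and C' is exactly a path of length l-1 or a path of length l. -/

import Mathlib

open SimpleGraph

section Stmt9Aux

open Walk


variable {V : Type*} {Γ : SimpleGraph V}


theorem twoPathsAux : ∀ (N : ℕ) {x y : V} (p q : Γ.Walk x y),
    2 * p.length + q.length ≤ N → p.IsPath → q.IsPath → p ≠ q →
    ∃ (w : V) (c : Γ.Walk w w), c.IsCycle ∧ c.length ≤ p.length + q.length := by
  intro N
  induction N with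
  | zero =>
    intro x y p q hN hp hq hne
    classical
    cases p with
    | nil =>
      rw [Walk.isPath_iff_eq_nil.mp hq] at hne
      exact absurd rfl hne
    | cons h p' => simp [Walk.length_cons] at hN
  | succ N ih =>
    intro x y p q hN hp hq hne
    classical
    cases p with
    | nil =>
      rw [Walk.isPath_iff_eq_nil.mp hq] at hne
      exact absurd rfl hne
    | cons h p' =>
      rename_i a
      -- h : Γ.Adj x a, p' : Γ.Walk a y
      by_cases hmem : a ∈ q.support
      · by_cases hedge : s(x, a) ∈ q.edges
        · -- q = cons (x~b) q' with a = b
          cases q with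
          | nil => simp at hedge
          | cons hb q' =>
            rename_i b
            rw [Walk.edges_cons, List.mem_cons] at hedge
            rcases hedge with heq | hedge
            · have hab : a = b := by
                rw [Sym2.eq_iff] at heq
                rcases heq with ⟨-, hab⟩ | ⟨hxb, hax⟩
                · exact hab
                · exact absurd hax.symm h.ne
              subst hab
              have hp' : p'.IsPath := (Walk.cons_isPath_iff _ _).mp hp |>.1
              have hq' : q'.IsPath := (Walk.cons_isPath_iff _ _).mp hq |>.1
              have hne' : p' ≠ q' := by
                rintro rfl; exact hne rfl
              obtain ⟨w, c, hc, hlen⟩ := ih p' q' (by simp at hN ⊢; omega) hp' hq' hne'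
              exact ⟨w, c, hc, by simp at hlen ⊢; omega⟩
            · exact absurd (Walk.fst_mem_support_of_mem_edges q' hedge)
                (((Walk.cons_isPath_iff _ _).mp hq).2)
        · -- build cycle directly
          refine ⟨x, Walk.cons h (q.takeUntil a hmem).reverse, ?_, ?_⟩
          · rw [Walk.cons_isCycle_iff]
            refine ⟨(hq.takeUntil hmem).reverse, ?_⟩
            rw [Walk.edges_reverse, List.mem_reverse]
            exact fun hc => hedge (Walk.edges_takeUntil_subset q hmem hc)
          · have := Walk.length_takeUntil_le q hmem
            simp only [Walk.length_cons, Walk.length_reverse]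
            omega
      · -- recurse on p' vs cons h.symm q
        have hq2 : (Walk.cons h.symm q).IsPath := by
          rw [Walk.cons_isPath_iff]; exact ⟨hq, hmem⟩
        have hp' : p'.IsPath := ((Walk.cons_isPath_iff _ _).mp hp).1
        have hne' : p' ≠ Walk.cons h.symm q := by
          rintro rfl
          exact ((Walk.cons_isPath_iff _ _).mp hp).2
            (by simp [Walk.support_cons, Walk.start_mem_support])
        obtain ⟨w, c, hc, hlen⟩ := ih p' (Walk.cons h.symm q)
          (by simp at hN ⊢; omega) hp' hq2 hne'
        exact ⟨w, c, hc, by simp at hlen ⊢; omega⟩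

theorem twoPaths {x y : V} (p q : Γ.Walk x y) (hp : p.IsPath) (hq : q.IsPath) (hne : p ≠ q) :
    ∃ (w : V) (c : Γ.Walk w w), c.IsCycle ∧ c.length ≤ p.length + q.length :=
  twoPathsAux (2 * p.length + q.length) p q le_rfl hp hq hne

theorem shortUnique {N : ℕ} (hg : ∀ (v : V) (w : Γ.Walk v v), w.IsCycle → N ≤ w.length)
    {x y : V} {p q : Γ.Walk x y} (hp : p.IsPath) (hq : q.IsPath)
    (hlen : p.length + q.length < N) : p = q := by
  by_contra hne
  obtain ⟨w, c, hc, hl⟩ := twoPaths p q hp hq hne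
  exact absurd (hg w c hc) (by omega)


/-- Periodic enumeration of a cycle subgraph with period `L`. -/
structure CycData {V : Type*} (Γ : SimpleGraph V) (H : Γ.Subgraph) (L : ℕ) : Type _ where
  F : ℕ → V
  hL : 2 ≤ L
  hinj : ∀ m n : ℕ, F m = F n ↔ m % L = n % L
  hverts : H.verts = Set.range F
  hadj : ∀ x y, H.Adj x y ↔ ∃ n, (x = F n ∧ y = F (n + 1)) ∨ (y = F n ∧ x = F (n + 1))

namespace CycData

variable {H : Γ.Subgraph} {L : ℕ} (c : CycData Γ H L)

lemma adjH (n : ℕ) : H.Adj (c.F n) (c.F (n + 1)) :=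
  (c.hadj _ _).2 ⟨n, Or.inl ⟨rfl, rfl⟩⟩

lemma adjG (n : ℕ) : Γ.Adj (c.F n) (c.F (n + 1)) := (c.adjH n).adj_sub

lemma memVerts (n : ℕ) : c.F n ∈ H.verts := by rw [c.hverts]; exact Set.mem_range_self n

lemma F_congr {a b : ℕ} (h : a % L = b % L) : c.F a = c.F b := (c.hinj _ _).2 h

lemma F_add_mul (n k : ℕ) : c.F (n + L * k) = c.F n :=
  c.F_congr (Nat.add_mul_mod_self_left n L k)

lemma F_inj_lt {a b : ℕ} (ha : a < L) (hb : b < L) (h : c.F a = c.F b) : a = b := by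
  have := (c.hinj a b).1 h
  rwa [Nat.mod_eq_of_lt ha, Nat.mod_eq_of_lt hb] at this

lemma rsq {L : ℕ} (hL : 2 ≤ L) (t : ℕ) :
    (L - 1) * ((L - 1) * t) = t + L * ((L - 2) * t) := by
  zify [show (1:ℕ) ≤ L by omega, hL]
  ring

lemma F_rsq (t : ℕ) : c.F ((L - 1) * ((L - 1) * t)) = c.F t := by
  rw [rsq c.hL t]; exact c.F_add_mul t _

/-- Every `H`-neighbour of `c.F a` is `c.F (a+1)` or `c.F (a + (L-1))`. -/
lemma neighbor {a : ℕ} {y : V} (h : H.Adj (c.F a) y) :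
    y = c.F (a + 1) ∨ y = c.F (a + (L - 1)) := by
  obtain ⟨n, hn | hn⟩ := (c.hadj _ _).1 h
  · left
    have han : a % L = n % L := (c.hinj a n).1 hn.1
    rw [hn.2]
    exact c.F_congr (Nat.ModEq.add_right 1 (show Nat.ModEq L n a from han.symm))
  · right
    have han : a % L = (n + 1) % L := (c.hinj a (n + 1)).1 hn.2
    rw [hn.1]
    apply c.F_congr
    have : (n + L) % L = (a + (L - 1)) % L := by
      have h2 := c.hL
      have h3 : n + L = (n + 1) + (L - 1) := by omega
      rw [h3]
      exact Nat.ModEq.add_right (L - 1) (show Nat.ModEq L (n+1) a from han.symm)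
    calc n % L = (n + L) % L := (Nat.add_mod_right n L).symm
    _ = (a + (L - 1)) % L := this

/-- shift the enumeration -/
def shift (k : ℕ) : CycData Γ H L where
  F n := c.F (n + k)
  hL := c.hL
  hinj m n :=
    ⟨fun h => Nat.ModEq.add_right_cancel' k ((c.hinj _ _).1 h),
     fun h => (c.hinj _ _).2 (Nat.ModEq.add_right k h)⟩
  hverts := by
    rw [c.hverts]
    ext x
    constructor
    · rintro ⟨n, rfl⟩
      refine ⟨n + (L - 1) * k, ?_⟩
      show c.F (n + (L - 1) * k + k) = c.F n
      have h1 : (L - 1) * k = L * k - k := by rw [Nat.sub_one_mul]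
      have h2 : k ≤ L * k := Nat.le_mul_of_pos_left k (by have := c.hL; omega)
      have : n + (L - 1) * k + k = n + L * k := by omega
      rw [this]; exact c.F_add_mul n k
    · rintro ⟨n, rfl⟩
      exact ⟨n + k, rfl⟩
  hadj x y := by
    rw [c.hadj]
    have h1 : (L - 1) * k = L * k - k := by rw [Nat.sub_one_mul]
    have h2 : k ≤ L * k := Nat.le_mul_of_pos_left k (by have := c.hL; omega)
    constructor
    · rintro ⟨n, hn⟩
      refine ⟨n + (L - 1) * k, ?_⟩
      have e1 : c.F (n + (L - 1) * k + k) = c.F n := by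
        have : n + (L - 1) * k + k = n + L * k := by omega
        rw [this]; exact c.F_add_mul n k
      have e2 : c.F (n + (L - 1) * k + 1 + k) = c.F (n + 1) := by
        have : n + (L - 1) * k + 1 + k = (n + 1) + L * k := by omega
        rw [this]; exact c.F_add_mul (n + 1) k
      show (x = c.F (n + (L-1)*k + k) ∧ y = c.F (n + (L-1)*k + 1 + k)) ∨
        (y = c.F (n + (L-1)*k + k) ∧ x = c.F (n + (L-1)*k + 1 + k))
      rw [e1, e2]; exact hn
    · rintro ⟨n, hn⟩
      refine ⟨n + k, ?_⟩
      have e1 : c.F (n + k + 1) = c.F (n + 1 + k) := by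
        have : n + k + 1 = n + 1 + k := by omega
        rw [this]
      rw [e1]; exact hn

@[simp] lemma shift_F (k n : ℕ) : (c.shift k).F n = c.F (n + k) := rfl

/-- reflect the enumeration -/
def refl : CycData Γ H L where
  F n := c.F ((L - 1) * n)
  hL := c.hL
  hinj m n := by
    constructor
    · intro h
      have h2 := (c.hinj _ _).1 h
      have h3 : ((L-1) * ((L-1) * m)) % L = ((L-1) * ((L-1) * n)) % L :=
        Nat.ModEq.mul_left (L - 1) h2
      rwa [rsq c.hL m, rsq c.hL n, Nat.add_mul_mod_self_left, Nat.add_mul_mod_self_left] at h3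
    · intro h
      exact c.F_congr (Nat.ModEq.mul_left (L - 1) h)
  hverts := by
    rw [c.hverts]
    ext x
    constructor
    · rintro ⟨n, rfl⟩
      exact ⟨(L - 1) * n, c.F_rsq n⟩
    · rintro ⟨n, rfl⟩
      exact ⟨(L - 1) * n, rfl⟩
  hadj x y := by
    rw [c.hadj]
    have hL := c.hL
    constructor
    · rintro ⟨n, hn⟩
      refine ⟨(L - 1) * (n + 1), ?_⟩
      have e1 : c.F ((L - 1) * ((L - 1) * (n + 1))) = c.F (n + 1) := c.F_rsq (n + 1)
      have e2 : c.F ((L - 1) * ((L - 1) * (n + 1) + 1)) = c.F n := by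
        have hid : (L - 1) * ((L - 1) * (n + 1) + 1) = n + L * ((L - 2) * (n + 1) + 1) := by
          zify [show (1:ℕ) ≤ L by omega, show (2:ℕ) ≤ L by omega]
          ring
        rw [hid]; exact c.F_add_mul n _
      show (x = c.F ((L-1) * ((L-1) * (n+1))) ∧ y = c.F ((L-1) * ((L-1) * (n+1) + 1))) ∨
        (y = c.F ((L-1) * ((L-1) * (n+1))) ∧ x = c.F ((L-1) * ((L-1) * (n+1) + 1)))
      rw [e1, e2]
      tauto
    · rintro ⟨m, hm⟩
      refine ⟨(L - 1) * (m + 1), ?_⟩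
      have e2 : c.F ((L - 1) * (m + 1) + 1) = c.F ((L - 1) * m) := by
        have hid : (L - 1) * (m + 1) + 1 = (L - 1) * m + L * 1 := by
          rw [Nat.mul_succ]; omega
        rw [hid]; exact c.F_add_mul _ 1
      rw [e2]
      tauto

@[simp] lemma refl_F (n : ℕ) : c.refl.F n = c.F ((L - 1) * n) := rfl

/-- The composite "reflect then shift" enumeration. -/
lemma conj_F (s : ℕ) {m n : ℕ} (h : (m + n + s) % L = 0) :
    ((c.refl).shift s).F n = c.F m := by
  have hL := c.hL
  show c.F ((L - 1) * (n + s)) = c.F m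
  set T := n + s with hT
  obtain ⟨j, hj⟩ : L ∣ m + T := Nat.dvd_of_mod_eq_zero (by rw [hT, ← Nat.add_assoc]; exact h)
  have h1 : (L - 1) * T = L * T - T := by rw [Nat.sub_one_mul]
  have h2 : T ≤ L * T := Nat.le_mul_of_pos_left T (by omega)
  have e1 : c.F ((L - 1) * T + L * j) = c.F ((L - 1) * T) := c.F_add_mul _ j
  have e2 : (L - 1) * T + L * j = m + L * T := by omega
  rw [← e1, e2]
  exact c.F_add_mul m T

/-- The walk in `Γ` along `H` from `c.F a` of length `m`. -/
def arc : (a m : ℕ) → Γ.Walk (c.F a) (c.F (a + m))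
  | _, 0 => Walk.nil
  | a, m + 1 => Walk.cons (c.adjG a) ((arc (a + 1) m).copy rfl (congrArg c.F (by omega)))

@[simp] lemma length_arc : ∀ (a m : ℕ), (c.arc a m).length = m
  | _, 0 => rfl
  | a, m + 1 => by
    rw [arc, Walk.length_cons, Walk.length_copy, length_arc (a+1) m]

lemma getVert_arc : ∀ (a m t : ℕ), t ≤ m → (c.arc a m).getVert t = c.F (a + t)
  | a, 0, t, ht => by
    interval_cases t
    exact Walk.getVert_zero _
  | a, m + 1, 0, ht => Walk.getVert_zero _
  | a, m + 1, t + 1, ht => by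
    rw [arc, Walk.getVert_cons_succ, Walk.getVert_copy,
      getVert_arc (a + 1) m t (by omega)]
    exact congrArg c.F (by omega)

lemma mem_support_arc {a m : ℕ} {x : V} (hx : x ∈ (c.arc a m).support) :
    ∃ t, t ≤ m ∧ x = c.F (a + t) := by
  rw [Walk.mem_support_iff_exists_getVert] at hx
  obtain ⟨t, hgv, htl⟩ := hx
  rw [c.length_arc] at htl
  exact ⟨t, htl, by rw [← hgv, c.getVert_arc a m t htl]⟩

lemma isPath_arc : ∀ (a m : ℕ), m < L → (c.arc a m).IsPath
  | _, 0, _ => Walk.IsPath.nil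
  | a, m + 1, hm => by
    rw [arc]
    rw [Walk.cons_isPath_iff]
    constructor
    · rw [Walk.isPath_copy]
      exact isPath_arc (a + 1) m (by omega)
    · intro hmem
      rw [Walk.support_copy] at hmem
      obtain ⟨t, htm, hx⟩ := c.mem_support_arc hmem
      have hmod : a % L = (a + 1 + t) % L := (c.hinj _ _).1 hx
      have hL0 : 0 < L := by omega
      have hxa := Nat.mod_lt a hL0
      have hw : 1 + t < L := by omega
      have h0 : a + 1 + t = a + (1 + t) := by omega
      rw [h0, Nat.add_mod a (1 + t) L, Nat.mod_eq_of_lt hw] at hmod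
      by_cases hcase : a % L + (1 + t) < L
      · rw [Nat.mod_eq_of_lt hcase] at hmod; omega
      · have h6 : (a % L + (1 + t)) % L = a % L + (1 + t) - L := by
          rw [Nat.mod_eq_sub_mod (by omega)]
          exact Nat.mod_eq_of_lt (by omega)
        omega

end CycData

section OfIso

variable {l : ℕ}

lemma cyc_adj_iff (hl : 2 ≤ l) (u v : Fin (2 * l)) :
    (cycleGraph (2 * l)).Adj u v ↔
      (v.val = u.val + 1 ∨ (u.val = 2 * l - 1 ∧ v.val = 0)) ∨
      (u.val = v.val + 1 ∨ (v.val = 2 * l - 1 ∧ u.val = 0)) := by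
  rw [cycleGraph_adj']
  constructor
  · rintro (h | h)
    · right
      rw [Fin.sub_def] at h
      simp only at h
      have h1 : (2 * l - v.val + u.val) % (2 * l) = 1 := h
      have h2 := u.is_lt
      have h3 := v.is_lt
      by_cases hc : 2 * l - v.val + u.val < 2 * l
      · rw [Nat.mod_eq_of_lt hc] at h1; omega
      · have h6 : (2 * l - ↑v + ↑u) % (2 * l) = 2 * l - ↑v + ↑u - 2 * l := by
          rw [Nat.mod_eq_sub_mod (by omega)]
          exact Nat.mod_eq_of_lt (by omega)
        omega
    · left
      rw [Fin.sub_def] at h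
      simp only at h
      have h1 : (2 * l - u.val + v.val) % (2 * l) = 1 := h
      have h2 := u.is_lt
      have h3 := v.is_lt
      by_cases hc : 2 * l - u.val + v.val < 2 * l
      · rw [Nat.mod_eq_of_lt hc] at h1; omega
      · have h6 : (2 * l - ↑u + ↑v) % (2 * l) = 2 * l - ↑u + ↑v - 2 * l := by
          rw [Nat.mod_eq_sub_mod (by omega)]
          exact Nat.mod_eq_of_lt (by omega)
        omega
  · have h2 := u.is_lt
    have h3 := v.is_lt
    rintro (h | h)
    · right
      rw [Fin.sub_def]
      simp only
      show (2 * l - u.val + v.val) % (2 * l) = 1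
      rcases h with h | h
      · rw [show 2 * l - u.val + v.val = 2 * l + 1 by omega, Nat.add_mod_left]
        exact Nat.mod_eq_of_lt (by omega)
      · rw [show 2 * l - u.val + v.val = 1 by omega]
        exact Nat.mod_eq_of_lt (by omega)
    · left
      rw [Fin.sub_def]
      simp only
      show (2 * l - v.val + u.val) % (2 * l) = 1
      rcases h with h | h
      · rw [show 2 * l - v.val + u.val = 2 * l + 1 by omega, Nat.add_mod_left]
        exact Nat.mod_eq_of_lt (by omega)
      · rw [show 2 * l - v.val + u.val = 1 by omega]
        exact Nat.mod_eq_of_lt (by omega)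

/-- Build a `CycData` from an isomorphism with the cycle graph. -/
noncomputable def CycData.ofIso (hl : 2 ≤ l) (H : Γ.Subgraph)
    (e : H.coe ≃g cycleGraph (2 * l)) : CycData Γ H (2 * l) where
  F n := (e.symm ⟨n % (2 * l), Nat.mod_lt _ (by omega)⟩ : H.verts).val
  hL := by omega
  hinj m n := by
    constructor
    · intro h
      have h2 : e.symm ⟨m % (2 * l), _⟩ = e.symm ⟨n % (2 * l), _⟩ := Subtype.val_injective h
      have h3 := e.symm.injective h2
      exact congrArg Fin.val h3
    · intro h
      simp only [show m % (2 * l) = n % (2 * l) from h]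
  hverts := by
    ext x
    constructor
    · intro hx
      refine ⟨(e ⟨x, hx⟩).val, ?_⟩
      have h1 : (⟨(e ⟨x, hx⟩).val % (2 * l), Nat.mod_lt _ (by omega)⟩ : Fin (2 * l)) = e ⟨x, hx⟩ :=
        Fin.ext (Nat.mod_eq_of_lt (e ⟨x, hx⟩).is_lt)
      show ((e.symm ⟨(e ⟨x, hx⟩).val % (2 * l), Nat.mod_lt _ (by omega)⟩ : H.verts) : V) = x
      rw [h1]
      exact congrArg Subtype.val (e.symm_apply_apply ⟨x, hx⟩)
    · rintro ⟨n, rfl⟩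
      exact (e.symm _).2
  hadj x y := by
    constructor
    · intro hxy
      have hx : x ∈ H.verts := hxy.fst_mem
      have hy : y ∈ H.verts := hxy.snd_mem
      have hadj : H.coe.Adj ⟨x, hx⟩ ⟨y, hy⟩ := hxy
      rw [← e.map_rel_iff] at hadj
      rw [cyc_adj_iff hl] at hadj
      set u := e ⟨x, hx⟩ with hu
      set v := e ⟨y, hy⟩ with hv
      have hue : (e.symm ⟨u.val % (2 * l), Nat.mod_lt _ (by omega)⟩ : H.verts).val = x := by
        have h1 : (⟨u.val % (2 * l), Nat.mod_lt _ (by omega)⟩ : Fin (2 * l)) = u :=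
          Fin.ext (Nat.mod_eq_of_lt u.is_lt)
        rw [h1, hu]
        exact congrArg Subtype.val (e.symm_apply_apply ⟨x, hx⟩)
      have hve : (e.symm ⟨v.val % (2 * l), Nat.mod_lt _ (by omega)⟩ : H.verts).val = y := by
        have h1 : (⟨v.val % (2 * l), Nat.mod_lt _ (by omega)⟩ : Fin (2 * l)) = v :=
          Fin.ext (Nat.mod_eq_of_lt v.is_lt)
        rw [h1, hv]
        exact congrArg Subtype.val (e.symm_apply_apply ⟨y, hy⟩)
      have key : ∀ a b : Fin (2 * l), b.val = a.val + 1 ∨ (a.val = 2 * l - 1 ∧ b.val = 0) →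
          (a.val + 1) % (2 * l) = b.val := by
        rintro a b (h | h)
        · rw [h]; exact Nat.mod_eq_of_lt (by omega)
        · rw [h.1, h.2, show 2 * l - 1 + 1 = 2 * l by omega, Nat.mod_self]
      rcases hadj with h | h
      · refine ⟨u.val, Or.inl ⟨hue.symm, ?_⟩⟩
        show y = (e.symm ⟨(u.val + 1) % (2 * l), Nat.mod_lt _ (by omega)⟩ : H.verts).val
        have h4 : (⟨(u.val + 1) % (2 * l), Nat.mod_lt _ (by omega)⟩ : Fin (2 * l)) = v :=
          Fin.ext (key u v h)
        rw [h4, hv]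
        exact (congrArg Subtype.val (e.symm_apply_apply ⟨y, hy⟩)).symm
      · refine ⟨v.val, Or.inr ⟨hve.symm, ?_⟩⟩
        show x = (e.symm ⟨(v.val + 1) % (2 * l), Nat.mod_lt _ (by omega)⟩ : H.verts).val
        have h4 : (⟨(v.val + 1) % (2 * l), Nat.mod_lt _ (by omega)⟩ : Fin (2 * l)) = u :=
          Fin.ext (key v u h)
        rw [h4, hu]
        exact (congrArg Subtype.val (e.symm_apply_apply ⟨x, hx⟩)).symm
    · have main : ∀ n : ℕ, H.Adj
          ((e.symm ⟨n % (2 * l), Nat.mod_lt _ (by omega)⟩ : H.verts) : V)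
          ((e.symm ⟨(n + 1) % (2 * l), Nat.mod_lt _ (by omega)⟩ : H.verts) : V) := by
        intro n
        have ha := Nat.mod_lt n (show 0 < 2 * l by omega)
        have hmod : (n + 1) % (2 * l) = (n % (2 * l) + 1) % (2 * l) := by
          conv_lhs => rw [Nat.add_mod]
          rw [Nat.mod_eq_of_lt (show 1 < 2 * l by omega)]
        have hcyc : (cycleGraph (2 * l)).Adj ⟨n % (2 * l), Nat.mod_lt _ (by omega)⟩
            ⟨(n + 1) % (2 * l), Nat.mod_lt _ (by omega)⟩ := by
          rw [cyc_adj_iff hl]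
          left
          by_cases hc : n % (2 * l) + 1 < 2 * l
          · left
            show (n + 1) % (2 * l) = n % (2 * l) + 1
            rw [hmod]
            exact Nat.mod_eq_of_lt hc
          · right
            refine ⟨show n % (2 * l) = 2 * l - 1 by omega, ?_⟩
            show (n + 1) % (2 * l) = 0
            rw [hmod, show n % (2 * l) + 1 = 2 * l by omega, Nat.mod_self]
        have h5 : H.coe.Adj (e.symm ⟨n % (2 * l), Nat.mod_lt _ (by omega)⟩)
            (e.symm ⟨(n + 1) % (2 * l), Nat.mod_lt _ (by omega)⟩) :=
          e.symm.map_rel_iff.2 hcyc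
        exact h5
      rintro ⟨n, hn | hn⟩
      · rw [hn.1, hn.2]; exact main n
      · rw [hn.1, hn.2]; exact (main n).symm

end OfIso

namespace CycData

/-- Align a `CycData` so that its first `k` values agree with a given `H`-path. -/
lemma exists_align {H : Γ.Subgraph} {L : ℕ} (c : CycData Γ H L) (x : ℕ → V) (k : ℕ)
    (hk : 2 ≤ k) (hkL : k < L)
    (hxadj : ∀ i, i + 2 ≤ k → H.Adj (x i) (x (i + 1)))
    (hxinj : ∀ i j, i < k → j < k → x i = x j → i = j) :
    ∃ c' : CycData Γ H L, ∀ i, i < k → c'.F i = x i := by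
  have hx0 : x 0 ∈ H.verts := (hxadj 0 (by omega)).fst_mem
  rw [c.hverts] at hx0
  obtain ⟨n₀, hn₀⟩ := hx0
  set c₀ := c.shift n₀ with hc₀
  have h0 : c₀.F 0 = x 0 := by rw [shift_F]; rw [Nat.zero_add]; exact hn₀
  have hstep : x 1 = c₀.F 1 ∨ x 1 = c₀.F (0 + (L - 1)) := by
    apply c₀.neighbor
    rw [show c₀.F 0 = x 0 from h0]
    exact hxadj 0 (by omega)
  have key : ∃ c' : CycData Γ H L, c'.F 0 = x 0 ∧ c'.F 1 = x 1 := by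
    rcases hstep with h1 | h1
    · exact ⟨c₀, h0, h1.symm⟩
    · refine ⟨c₀.refl, ?_, ?_⟩
      · show c₀.F ((L - 1) * 0) = x 0
        rw [Nat.mul_zero]; exact h0
      · show c₀.F ((L - 1) * 1) = x 1
        rw [Nat.mul_one, h1]
        exact congrArg c₀.F (by omega)
  obtain ⟨c', h0', h1'⟩ := key
  have main : ∀ i, i + 1 < k → c'.F i = x i ∧ c'.F (i + 1) = x (i + 1) := by
    intro i
    induction i with
    | zero => exact fun _ => ⟨h0', h1'⟩
    | succ i ih =>
      intro hik
      obtain ⟨hFi, hFi1⟩ := ih (by omega)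
      refine ⟨hFi1, ?_⟩
      have hadj : H.Adj (c'.F (i + 1)) (x (i + 2)) := by
        rw [hFi1]; exact hxadj (i + 1) (by omega)
      rcases c'.neighbor hadj with h | h
      · exact h.symm
      · exfalso
        have hL := c'.hL
        have he : c'.F (i + 1 + (L - 1)) = c'.F i := by
          have : i + 1 + (L - 1) = i + L * 1 := by omega
          rw [this]; exact c'.F_add_mul i 1
        rw [he, hFi] at h
        have := hxinj (i + 2) i (by omega) (by omega) h
        omega
  refine ⟨c', ?_⟩
  intro i hik
  match i with
  | 0 => exact h0'
  | Nat.succ j => exact (main j (by omega)).2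

end CycData

section Main

variable {l : ℕ} {H₁ H₂ : Γ.Subgraph}
  (c₁ : CycData Γ H₁ (2 * l)) (c₂ : CycData Γ H₂ (2 * l))

/-- The first common position after the shared path is `l` or `2l-1`, with equal labels. -/
lemma min_lemma (hl : 2 ≤ l)
    (hgirth : ∀ (v : V) (w : Γ.Walk v v), w.IsCycle → 2 * l ≤ w.length)
    (halign : ∀ i, i < l → c₁.F i = c₂.F i)
    (i : ℕ) (hi : l ≤ i) (hi2 : i < 2 * l) (hcom : c₁.F i ∈ H₂.verts)
    (hmin : ∀ t, l ≤ t → t < i → c₁.F t ∉ H₂.verts) :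
    (i = l ∧ c₁.F l = c₂.F l) ∨ (i = 2 * l - 1 ∧ c₁.F (2 * l - 1) = c₂.F (2 * l - 1)) := by
  rw [c₂.hverts] at hcom
  obtain ⟨j₀, hj₀⟩ := hcom
  have hj' : c₂.F (j₀ % (2 * l)) = c₁.F i := by rw [c₂.F_congr (Nat.mod_mod_of_dvd j₀ dvd_rfl)]; exact hj₀
  set j := j₀ % (2 * l) with hjdef
  have hjlt : j < 2 * l := Nat.mod_lt _ (by omega)
  have hjge : l ≤ j := by
    by_contra hjl
    have h1 : c₁.F j = c₁.F i := by rw [halign j (by omega)]; exact hj'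
    have := c₁.F_inj_lt (by omega) hi2 h1
    omega
  set a := i - l + 1 with ha
  set d := j - l + 1 with hd
  have ha1 : 1 ≤ a ∧ a ≤ l := by omega
  have hd1 : 1 ≤ d ∧ d ≤ l := by omega
  have P1 : Γ.Walk (c₁.F (l - 1)) (c₁.F i) :=
    (c₁.arc (l - 1) a).copy rfl (congrArg c₁.F (by omega))
  set P1 : Γ.Walk (c₁.F (l - 1)) (c₁.F i) :=
    (c₁.arc (l - 1) a).copy rfl (congrArg c₁.F (by omega)) with hP1
  set P2 : Γ.Walk (c₁.F (l - 1)) (c₁.F i) :=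
    (c₂.arc (l - 1) d).copy (halign (l - 1) (by omega)).symm
      (by rw [show l - 1 + d = j by omega]; exact hj') with hP2
  have hP1path : P1.IsPath := by
    rw [hP1, Walk.isPath_copy]; exact c₁.isPath_arc _ _ (by omega)
  have hP2path : P2.IsPath := by
    rw [hP2, Walk.isPath_copy]; exact c₂.isPath_arc _ _ (by omega)
  have hP1len : P1.length = a := by rw [hP1, Walk.length_copy, c₁.length_arc]
  have hP2len : P2.length = d := by rw [hP2, Walk.length_copy, c₂.length_arc]
  by_cases hcase : a + d < 2 * l
  · have heq : P1 = P2 := shortUnique hgirth hP1path hP2path (by omega)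
    have had : a = d := by rw [← hP1len, ← hP2len, heq]
    by_cases ha2 : 2 ≤ a
    · exfalso
      have hgv : P1.getVert 1 = P2.getVert 1 := by rw [heq]
      have hgv1 : P1.getVert 1 = c₁.F l := by
        rw [hP1, Walk.getVert_copy, c₁.getVert_arc _ _ 1 (by omega)]
        exact congrArg c₁.F (by omega)
      have hgv2 : P2.getVert 1 = c₂.F l := by
        rw [hP2, Walk.getVert_copy, c₂.getVert_arc _ _ 1 (by omega)]
        exact congrArg c₂.F (by omega)
      have : c₁.F l ∈ H₂.verts := by
        rw [← hgv1, hgv, hgv2]; exact c₂.memVerts l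
      exact hmin l le_rfl (by omega) this
    · left
      have hia : i = l := by omega
      have hja : j = l := by omega
      refine ⟨hia, ?_⟩
      calc c₁.F l = c₁.F i := congrArg c₁.F hia.symm
      _ = c₂.F j := hj'.symm
      _ = c₂.F l := congrArg c₂.F hja
  · right
    have hia : i = 2 * l - 1 := by omega
    have hja : j = 2 * l - 1 := by omega
    refine ⟨hia, ?_⟩
    calc c₁.F (2 * l - 1) = c₁.F i := congrArg c₁.F hia.symm
    _ = c₂.F j := hj'.symm
    _ = c₂.F (2 * l - 1) := congrArg c₂.F hja

/-- The last common position is `l` or `2l-1`, with equal labels. -/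
lemma max_lemma (hl : 2 ≤ l)
    (hgirth : ∀ (v : V) (w : Γ.Walk v v), w.IsCycle → 2 * l ≤ w.length)
    (halign : ∀ i, i < l → c₁.F i = c₂.F i)
    (i : ℕ) (hi : l ≤ i) (hi2 : i < 2 * l) (hcom : c₁.F i ∈ H₂.verts)
    (hmax : ∀ t, i < t → t < 2 * l → c₁.F t ∉ H₂.verts) :
    (i = l ∧ c₁.F l = c₂.F l) ∨ (i = 2 * l - 1 ∧ c₁.F (2 * l - 1) = c₂.F (2 * l - 1)) := by
  set r₁ := (c₁.refl).shift (l + 1) with hr₁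
  set r₂ := (c₂.refl).shift (l + 1) with hr₂
  have e₁ : ∀ n m : ℕ, (m + n + (l + 1)) % (2 * l) = 0 → r₁.F n = c₁.F m :=
    fun n m h => c₁.conj_F (l + 1) h
  have e₂ : ∀ n m : ℕ, (m + n + (l + 1)) % (2 * l) = 0 → r₂.F n = c₂.F m :=
    fun n m h => c₂.conj_F (l + 1) h
  have htwol : (2 * l) % (2 * l) = 0 := Nat.mod_self _
  have hfourl : (4 * l) % (2 * l) = 0 := by
    rw [show 4 * l = 2 * l + 2 * l by omega, Nat.add_mod_left]; exact htwol
  have halign' : ∀ t, t < l → r₁.F t = r₂.F t := by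
    intro t ht
    rw [e₁ t (l - 1 - t) (by rw [show l - 1 - t + t + (l + 1) = 2 * l by omega]; exact htwol),
      e₂ t (l - 1 - t) (by rw [show l - 1 - t + t + (l + 1) = 2 * l by omega]; exact htwol)]
    exact halign _ (by omega)
  set i' := 3 * l - 1 - i with hi'
  have hri : r₁.F i' = c₁.F i :=
    e₁ i' i (by rw [show i + i' + (l + 1) = 4 * l by omega]; exact hfourl)
  have hres := min_lemma r₁ r₂ hl hgirth halign' i' (by omega) (by omega)
    (by rw [hri]; exact hcom)
    (by
      intro t hlt hti'
      rw [e₁ t (3 * l - 1 - t) (by rw [show 3 * l - 1 - t + t + (l + 1) = 4 * l by omega]; exact hfourl)]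
      exact hmax (3 * l - 1 - t) (by omega) (by omega))
  rcases hres with ⟨hi'l, heq⟩ | ⟨hi'l, heq⟩
  · right
    have hieq : i = 2 * l - 1 := by omega
    refine ⟨hieq, ?_⟩
    rw [e₁ l (2 * l - 1) (by rw [show 2 * l - 1 + l + (l + 1) = 4 * l by omega]; exact hfourl),
      e₂ l (2 * l - 1) (by rw [show 2 * l - 1 + l + (l + 1) = 4 * l by omega]; exact hfourl)] at heq
    exact heq
  · left
    have hieq : i = l := by omega
    refine ⟨hieq, ?_⟩
    rw [e₁ (2 * l - 1) l (by rw [show l + (2 * l - 1) + (l + 1) = 4 * l by omega]; exact hfourl),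
      e₂ (2 * l - 1) l (by rw [show l + (2 * l - 1) + (l + 1) = 4 * l by omega]; exact hfourl)] at heq
    exact heq

end Main

section Iso

variable {l : ℕ} {H₁ H₂ : Γ.Subgraph}
  (c₁ : CycData Γ H₁ (2 * l)) (c₂ : CycData Γ H₂ (2 * l))

/-- If the intersection is exactly an initial interval of `c₁` of size `k`, it is `pathGraph k`. -/
lemma iso_of_interval (hl : 2 ≤ l) (k : ℕ) (hk : 1 ≤ k) (hk2 : k < 2 * l)
    (hverts : (H₁ ⊓ H₂).verts = (fun n => c₁.F n) '' (Set.Iio k))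
    (hadjK : ∀ n, n + 1 < k → H₂.Adj (c₁.F n) (c₁.F (n + 1))) :
    Nonempty ((H₁ ⊓ H₂).coe ≃g pathGraph k) := by
  have hmem : ∀ i : Fin k, c₁.F i.val ∈ (H₁ ⊓ H₂).verts := by
    intro i
    rw [hverts]
    exact ⟨i.val, i.is_lt, rfl⟩
  set φ : Fin k → ((H₁ ⊓ H₂).verts : Set V) := fun i => ⟨c₁.F i.val, hmem i⟩ with hφ
  have hbij : Function.Bijective φ := by
    constructor
    · intro i j hij
      have := c₁.F_inj_lt (lt_trans i.is_lt hk2) (lt_trans j.is_lt hk2)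
        (congrArg Subtype.val hij)
      exact Fin.ext this
    · rintro ⟨x, hx⟩
      rw [hverts] at hx
      obtain ⟨n, hn, rfl⟩ := hx
      exact ⟨⟨n, hn⟩, rfl⟩
  set e : Fin k ≃ ((H₁ ⊓ H₂).verts : Set V) := Equiv.ofBijective φ hbij with he
  have hmap : ∀ i j : Fin k, (H₁ ⊓ H₂).coe.Adj (e i) (e j) ↔ (pathGraph k).Adj i j := by
    intro i j
    have hcoe : (H₁ ⊓ H₂).coe.Adj (e i) (e j) ↔ (H₁ ⊓ H₂).Adj (c₁.F i.val) (c₁.F j.val) :=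
      Iff.rfl
    rw [hcoe, Subgraph.inf_adj, pathGraph_adj]
    constructor
    · rintro ⟨h1, -⟩
      obtain ⟨n, hn | hn⟩ := (c₁.hadj _ _).1 h1
      · left
        have hs : i.val % (2 * l) = n % (2 * l) := (c₁.hinj _ _).1 hn.1
        have ht : j.val % (2 * l) = (n + 1) % (2 * l) := (c₁.hinj _ _).1 hn.2
        have hst : j.val % (2 * l) = (i.val + 1) % (2 * l) := by
          rw [ht]
          exact (Nat.ModEq.add_right 1 (show Nat.ModEq (2*l) i.val n from hs)).symm
        rw [Nat.mod_eq_of_lt (lt_trans j.is_lt hk2),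
          Nat.mod_eq_of_lt (by have := i.is_lt; omega)] at hst
        omega
      · right
        have hs : j.val % (2 * l) = n % (2 * l) := (c₁.hinj _ _).1 hn.1
        have ht : i.val % (2 * l) = (n + 1) % (2 * l) := (c₁.hinj _ _).1 hn.2
        have hst : i.val % (2 * l) = (j.val + 1) % (2 * l) := by
          rw [ht]
          exact (Nat.ModEq.add_right 1 (show Nat.ModEq (2*l) j.val n from hs)).symm
        rw [Nat.mod_eq_of_lt (lt_trans i.is_lt hk2),
          Nat.mod_eq_of_lt (by have := j.is_lt; omega)] at hst
        omega
    · rintro (h | h)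
      · have hj : j.val = i.val + 1 := h.symm
        constructor
        · rw [show (j : ℕ) = i.val + 1 from hj]
          exact c₁.adjH i.val
        · rw [show (j : ℕ) = i.val + 1 from hj]
          exact hadjK i.val (by omega)
      · have hi : i.val = j.val + 1 := h.symm
        constructor
        · rw [show (i : ℕ) = j.val + 1 from hi]
          exact (c₁.adjH j.val).symm
        · rw [show (i : ℕ) = j.val + 1 from hi]
          exact (hadjK j.val (by omega)).symm
  exact ⟨(RelIso.mk e (by intro i j; exact hmap i j)).symm⟩

end Iso

section Final

variable {l : ℕ} {H₁ H₂ : Γ.Subgraph}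

/-- If the two cycles agree also just after both ends of the shared path, they are equal. -/
lemma eq_of_both (c₁ : CycData Γ H₁ (2 * l)) (c₂ : CycData Γ H₂ (2 * l)) (hl : 2 ≤ l)
    (hgirth : ∀ (v : V) (w : Γ.Walk v v), w.IsCycle → 2 * l ≤ w.length)
    (halign : ∀ i, i < l → c₁.F i = c₂.F i)
    (hleft : c₁.F l = c₂.F l) (hright : c₁.F (2 * l - 1) = c₂.F (2 * l - 1)) :
    H₁ = H₂ := by
  set PX : Γ.Walk (c₁.F l) (c₁.F (2 * l - 1)) :=
    (c₁.arc l (l - 1)).copy rfl (congrArg c₁.F (by omega)) with hPX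
  set PY : Γ.Walk (c₁.F l) (c₁.F (2 * l - 1)) :=
    (c₂.arc l (l - 1)).copy hleft.symm
      (by rw [show l + (l - 1) = 2 * l - 1 by omega]; exact hright.symm) with hPY
  have heq : PX = PY := by
    apply shortUnique hgirth
    · rw [hPX, Walk.isPath_copy]; exact c₁.isPath_arc _ _ (by omega)
    · rw [hPY, Walk.isPath_copy]; exact c₂.isPath_arc _ _ (by omega)
    · rw [hPX, hPY, Walk.length_copy, Walk.length_copy, c₁.length_arc, c₂.length_arc]
      omega
  have hseg : ∀ t, t ≤ l - 1 → c₁.F (l + t) = c₂.F (l + t) := by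
    intro t ht
    have h1 : PX.getVert t = c₁.F (l + t) := by
      rw [hPX, Walk.getVert_copy]; exact c₁.getVert_arc _ _ _ ht
    have h2 : PY.getVert t = c₂.F (l + t) := by
      rw [hPY, Walk.getVert_copy]; exact c₂.getVert_arc _ _ _ ht
    rw [← h1, ← h2, heq]
  have hall : ∀ n, c₁.F n = c₂.F n := by
    intro n
    have hmod := Nat.mod_lt n (show 0 < 2 * l by omega)
    have e1 : c₁.F n = c₁.F (n % (2 * l)) := (c₁.F_congr (Nat.mod_mod_of_dvd n dvd_rfl)).symm
    have e2 : c₂.F (n % (2 * l)) = c₂.F n := c₂.F_congr (Nat.mod_mod_of_dvd n dvd_rfl)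
    rw [e1, ← e2]
    rcases Nat.lt_or_ge (n % (2 * l)) l with h | h
    · exact halign _ h
    · have := hseg (n % (2 * l) - l) (by omega)
      rwa [show l + (n % (2 * l) - l) = n % (2 * l) by omega] at this
  have hFF : c₁.F = c₂.F := funext hall
  apply Subgraph.ext
  · rw [c₁.hverts, c₂.hverts, hFF]
  · funext x y
    exact propext ((c₁.hadj x y).trans (by rw [hFF]; exact (c₂.hadj x y).symm))

/-- Case: no common vertices beyond the shared path. -/
lemma iso_exact (c₁ : CycData Γ H₁ (2 * l)) (c₂ : CycData Γ H₂ (2 * l)) (hl : 2 ≤ l)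
    (halign : ∀ i, i < l → c₁.F i = c₂.F i)
    (hA : ∀ t, l ≤ t → t < 2 * l → c₁.F t ∉ H₂.verts) :
    Nonempty ((H₁ ⊓ H₂).coe ≃g pathGraph l) := by
  apply iso_of_interval c₁ hl l (by omega) (by omega)
  · ext x
    constructor
    · rintro ⟨hx1, hx2⟩
      rw [c₁.hverts] at hx1
      obtain ⟨n₀, rfl⟩ := hx1
      have e1 : c₁.F (n₀ % (2 * l)) = c₁.F n₀ := c₁.F_congr (Nat.mod_mod_of_dvd n₀ dvd_rfl)
      have hmod := Nat.mod_lt n₀ (show 0 < 2 * l by omega)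
      refine ⟨n₀ % (2 * l), ?_, e1⟩
      rw [Set.mem_Iio]
      by_contra hge
      exact hA _ (by omega) hmod (e1 ▸ hx2)
    · rintro ⟨n, hn, rfl⟩
      rw [Set.mem_Iio] at hn
      refine ⟨c₁.memVerts n, ?_⟩
      show c₁.F n ∈ H₂.verts
      rw [halign n hn]; exact c₂.memVerts n
  · intro n hn
    rw [halign n (by omega), halign (n + 1) (by omega)]
    exact c₂.adjH n
/-- Case: exactly one extra common vertex, adjacent to position `l - 1`. -/
lemma iso_extend (c₁ : CycData Γ H₁ (2 * l)) (c₂ : CycData Γ H₂ (2 * l)) (hl : 2 ≤ l)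
    (halign : ∀ i, i < l → c₁.F i = c₂.F i)
    (hleft : c₁.F l = c₂.F l)
    (hA : ∀ t, l ≤ t → t < 2 * l → c₁.F t ∈ H₂.verts → t = l) :
    Nonempty ((H₁ ⊓ H₂).coe ≃g pathGraph (l + 1)) := by
  apply iso_of_interval c₁ hl (l + 1) (by omega) (by omega)
  · ext x
    constructor
    · rintro ⟨hx1, hx2⟩
      rw [c₁.hverts] at hx1
      obtain ⟨n₀, rfl⟩ := hx1
      have e1 : c₁.F (n₀ % (2 * l)) = c₁.F n₀ := c₁.F_congr (Nat.mod_mod_of_dvd n₀ dvd_rfl)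
      have hmod := Nat.mod_lt n₀ (show 0 < 2 * l by omega)
      refine ⟨n₀ % (2 * l), ?_, e1⟩
      rcases Nat.lt_or_ge (n₀ % (2 * l)) l with h | h
      · exact Set.mem_Iio.2 (by omega)
      · have := hA _ h hmod (e1 ▸ hx2)
        exact Set.mem_Iio.2 (by omega)
    · rintro ⟨n, hn, rfl⟩
      rcases Nat.lt_or_ge n l with h | h
      · refine ⟨c₁.memVerts n, ?_⟩
        show c₁.F n ∈ H₂.verts
        rw [halign n h]; exact c₂.memVerts n
      · have hnl : n = l := by have := Set.mem_Iio.1 hn; omega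
        subst hnl
        refine ⟨c₁.memVerts n, ?_⟩
        show c₁.F n ∈ H₂.verts
        rw [hleft]; exact c₂.memVerts n
  · intro n hn
    rcases Nat.lt_or_ge (n + 1) l with h | h
    · rw [halign n (by omega), halign (n + 1) (by omega)]
      exact c₂.adjH n
    · have hnl : n + 1 = l := by omega
      have h2 : c₁.F (n + 1) = c₂.F (n + 1) := by rw [hnl]; exact hleft
      rw [halign n (by omega), h2]
      exact c₂.adjH n

end Final

theorem stmt_9' {V : Type*} (G : SimpleGraph V) (l : ℕ) (hl : 2 ≤ l)
    (hgirth : ∀ (v : V) (w : G.Walk v v), w.IsCycle → 2 * l ≤ w.length)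
    (H₁ H₂ : G.Subgraph) (hne : H₁ ≠ H₂)
    (h₁ : Nonempty (H₁.coe ≃g cycleGraph (2 * l)))
    (h₂ : Nonempty (H₂.coe ≃g cycleGraph (2 * l)))
    (hshare : ∃ P : G.Subgraph, P ≤ H₁ ⊓ H₂ ∧ Nonempty (P.coe ≃g pathGraph l)) :
    Nonempty ((H₁ ⊓ H₂).coe ≃g pathGraph l) ∨
      Nonempty ((H₁ ⊓ H₂).coe ≃g pathGraph (l + 1)) := by
  classical
  obtain ⟨P, hPle, hρ⟩ := hshare
  obtain ⟨ρ⟩ := hρ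
  set c₁ : CycData G H₁ (2 * l) := CycData.ofIso hl H₁ (Classical.choice h₁) with hc₁
  set c₂ : CycData G H₂ (2 * l) := CycData.ofIso hl H₂ (Classical.choice h₂) with hc₂
  set x : ℕ → V := fun i => ((ρ.symm ⟨min i (l - 1), by omega⟩ : P.verts) : V) with hx
  have hxinj : ∀ i j, i < l → j < l → x i = x j → i = j := by
    intro i j hi hj hij
    have h1 : (ρ.symm ⟨min i (l - 1), by omega⟩ : P.verts) =
        (ρ.symm ⟨min j (l - 1), by omega⟩ : P.verts) := Subtype.val_injective hij
    have h2 := ρ.symm.injective h1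
    have h3 : min i (l - 1) = min j (l - 1) := congrArg Fin.val h2
    omega
  have hxadjP : ∀ i, i + 2 ≤ l → P.Adj (x i) (x (i + 1)) := by
    intro i hi
    have hpg : (pathGraph l).Adj ⟨min i (l - 1), by omega⟩ ⟨min (i + 1) (l - 1), by omega⟩ := by
      rw [pathGraph_adj]
      left
      show min i (l - 1) + 1 = min (i + 1) (l - 1)
      omega
    have := ρ.symm.map_rel_iff.2 hpg
    exact this
  have hxadj₁ : ∀ i, i + 2 ≤ l → H₁.Adj (x i) (x (i + 1)) :=
    fun i hi => (hPle.trans inf_le_left).2 (hxadjP i hi)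
  have hxadj₂ : ∀ i, i + 2 ≤ l → H₂.Adj (x i) (x (i + 1)) :=
    fun i hi => (hPle.trans inf_le_right).2 (hxadjP i hi)
  obtain ⟨d₁, hd₁⟩ := c₁.exists_align x l hl (by omega) hxadj₁ hxinj
  obtain ⟨d₂, hd₂⟩ := c₂.exists_align x l hl (by omega) hxadj₂ hxinj
  have halign : ∀ i, i < l → d₁.F i = d₂.F i := by
    intro i hi; rw [hd₁ i hi, hd₂ i hi]
  set A : Finset ℕ := (Finset.Ico l (2 * l)).filter (fun t => d₁.F t ∈ H₂.verts) with hA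
  by_cases hAne : A.Nonempty
  · set imin := A.min' hAne with himin
    set imax := A.max' hAne with himax
    have hminA : imin ∈ A := A.min'_mem hAne
    have hmaxA : imax ∈ A := A.max'_mem hAne
    obtain ⟨hminIco, hminCom⟩ := Finset.mem_filter.1 hminA
    obtain ⟨hmaxIco, hmaxCom⟩ := Finset.mem_filter.1 hmaxA
    rw [Finset.mem_Ico] at hminIco hmaxIco
    have hminCond : ∀ t, l ≤ t → t < imin → d₁.F t ∉ H₂.verts := by
      intro t ht1 ht2 hmem
      have : t ∈ A := Finset.mem_filter.2 ⟨Finset.mem_Ico.2 ⟨ht1, by omega⟩, hmem⟩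
      have := A.min'_le t this
      omega
    have hmaxCond : ∀ t, imax < t → t < 2 * l → d₁.F t ∉ H₂.verts := by
      intro t ht1 ht2 hmem
      have : t ∈ A := Finset.mem_filter.2 ⟨Finset.mem_Ico.2 ⟨by omega, ht2⟩, hmem⟩
      have := A.le_max' t this
      omega
    have rmin := min_lemma d₁ d₂ hl hgirth halign imin hminIco.1 hminIco.2 hminCom hminCond
    have rmax := max_lemma d₁ d₂ hl hgirth halign imax hmaxIco.1 hmaxIco.2 hmaxCom hmaxCond
    have hminmax : imin ≤ imax := A.min'_le imax hmaxA
    rcases rmin with ⟨hm1, heqL⟩ | ⟨hm1, heqR⟩ <;>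
      rcases rmax with ⟨hm2, heqL'⟩ | ⟨hm2, heqR'⟩
    · -- A = {l}
      right
      apply iso_extend d₁ d₂ hl halign heqL
      intro t ht ht2 hmem
      have : t ∈ A := Finset.mem_filter.2 ⟨Finset.mem_Ico.2 ⟨ht, ht2⟩, hmem⟩
      have h1 := A.min'_le t this
      have h2 := A.le_max' t this
      omega
    · exact absurd (eq_of_both d₁ d₂ hl hgirth halign heqL heqR') hne
    · omega
    · -- A = {2l - 1}; use reflected data
      right
      set r₁ := (d₁.refl).shift (l + 1) with hr₁
      set r₂ := (d₂.refl).shift (l + 1) with hr₂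
      have e₁ : ∀ n m : ℕ, (m + n + (l + 1)) % (2 * l) = 0 → r₁.F n = d₁.F m :=
        fun n m h => d₁.conj_F (l + 1) h
      have e₂ : ∀ n m : ℕ, (m + n + (l + 1)) % (2 * l) = 0 → r₂.F n = d₂.F m :=
        fun n m h => d₂.conj_F (l + 1) h
      have htwol : (2 * l) % (2 * l) = 0 := Nat.mod_self _
      have hfourl : (4 * l) % (2 * l) = 0 := by
        rw [show 4 * l = 2 * l + 2 * l by omega, Nat.add_mod_left]; exact htwol
      have halign' : ∀ t, t < l → r₁.F t = r₂.F t := by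
        intro t ht
        rw [e₁ t (l - 1 - t) (by rw [show l - 1 - t + t + (l + 1) = 2 * l by omega]; exact htwol),
          e₂ t (l - 1 - t) (by rw [show l - 1 - t + t + (l + 1) = 2 * l by omega]; exact htwol)]
        exact halign _ (by omega)
      have hleft' : r₁.F l = r₂.F l := by
        rw [e₁ l (2 * l - 1) (by rw [show 2 * l - 1 + l + (l + 1) = 4 * l by omega]; exact hfourl),
          e₂ l (2 * l - 1) (by rw [show 2 * l - 1 + l + (l + 1) = 4 * l by omega]; exact hfourl)]
        exact heqR
      apply iso_extend r₁ r₂ hl halign' hleft'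
      intro t ht ht2 hmem
      rw [e₁ t (3 * l - 1 - t)
        (by rw [show 3 * l - 1 - t + t + (l + 1) = 4 * l by omega]; exact hfourl)] at hmem
      have : 3 * l - 1 - t ∈ A :=
        Finset.mem_filter.2 ⟨Finset.mem_Ico.2 ⟨by omega, by omega⟩, hmem⟩
      have h1 := A.min'_le _ this
      have h2 := A.le_max' _ this
      omega
  · left
    apply iso_exact d₁ d₂ hl halign
    intro t ht ht2 hmem
    exact hAne ⟨t, Finset.mem_filter.2 ⟨Finset.mem_Ico.2 ⟨ht, ht2⟩, hmem⟩⟩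


end Stmt9Aux

/-- Let `G` be a bipartite graph with no cycle of length less than `2l` (`l ≥ 2`). If `C`
and `C'` are distinct cycles of length `2l` in `G` (given as subgraphs isomorphic to
`C_{2l}`) sharing a path with `l` vertices, then their intersection is exactly a path of
length `l-1` (with `l` vertices) or a path of length `l` (with `l+1` vertices). -/
theorem stmt_9 {V : Type*} (G : SimpleGraph V) (l : ℕ) (hl : 2 ≤ l)
    (hbip : G.Colorable 2)
    (hgirth : ∀ (v : V) (w : G.Walk v v), w.IsCycle → 2 * l ≤ w.length)
    (H₁ H₂ : G.Subgraph) (hne : H₁ ≠ H₂)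
    (h₁ : Nonempty (H₁.coe ≃g cycleGraph (2 * l)))
    (h₂ : Nonempty (H₂.coe ≃g cycleGraph (2 * l)))
    (hshare : ∃ P : G.Subgraph, P ≤ H₁ ⊓ H₂ ∧ Nonempty (P.coe ≃g pathGraph l)) :
    Nonempty ((H₁ ⊓ H₂).coe ≃g pathGraph l) ∨
      Nonempty ((H₁ ⊓ H₂).coe ≃g pathGraph (l + 1)) := by
  exact stmt_9' G l hl hgirth H₁ H₂ hne h₁ h₂ hshare
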